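/- Let A, B, M be positive semidefinite matrices of the same size and let C = A - B. Then A M A + 7 C M C ⪰ (1/2) B M B in the Loewner order. -/

import Mathlib

open Matrix

lemma psd_smul_aux {d : ℕ} {E : Matrix (Fin d) (Fin d) ℝ} {c : ℝ} (hc : 0 ≤ c)
    (hE : E.PosSemidef) : (c • E).PosSemidef := by
  constructor
  · unfold Matrix.IsHermitian
    rw [Matrix.conjTranspose_smul, hE.1]
    simp
  · intro x
    exact (hE.smul hc).2 x

/-- For PSD matrices `A`, `B`, `M` with `C = A - B`,
`A M A + 7 C M C ⪰ (1/2) B M B` in the Loewner order. -/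
theorem psd_square_order {d : ℕ} (A B M : Matrix (Fin d) (Fin d) ℝ)
    (hA : A.PosSemidef) (hB : B.PosSemidef) (hM : M.PosSemidef)
    (C : Matrix (Fin d) (Fin d) ℝ) (hC : C = A - B) :
    (A * M * A + (7 : ℝ) • (C * M * C) - (1 / 2 : ℝ) • (B * M * B)).PosSemidef := by
  subst hC
  have hCh : (A - B)ᴴ = A - B := by
    rw [Matrix.conjTranspose_sub, hA.1, hB.1]
  have key : A * M * A + (7 : ℝ) • ((A - B) * M * (A - B)) - (1 / 2 : ℝ) • (B * M * B)
      = (1/2 : ℝ) • ((A + (A - B))ᴴ * M * (A + (A - B)))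
        + (6 : ℝ) • ((A - B)ᴴ * M * (A - B)) := by
    rw [Matrix.conjTranspose_add, hA.1, hCh]
    have hB' : B = A - (A - B) := by abel
    rw [hB']
    simp only [mul_sub, sub_mul, mul_add, add_mul]
    module
  rw [key]
  exact (psd_smul_aux (by norm_num) (hM.conjTranspose_mul_mul_same _)).add
    (psd_smul_aux (by norm_num) (hM.conjTranspose_mul_mul_same _))
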